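/- If in addition μ = 0, then for all a ∈ ℝ^q and b ∈ ℝ, E|⟨a, W⟩ + b| ≥ min(η/2, 1) · max(‖a‖, |b|). -/

import Mathlib

open MeasureTheory
open scoped RealInnerProductSpace

/-- Let `W : Ω → ℝ^q` be integrable with mean `μ = 0`, and suppose
`E|⟨u, W − μ⟩| ≥ η > 0` for every unit vector `u`.  Then
`E|⟨a, W⟩ + b| ≥ min(η/2, 1) · max(‖a‖, |b|)` for all `a ∈ ℝ^q`, `b ∈ ℝ`. -/
theorem expectation_abs_inner_add_ge_of_mean_zero
    (q : ℕ) (hq : 1 ≤ q) {Ω : Type*} [MeasurableSpace Ω]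
    (P : Measure Ω) [IsProbabilityMeasure P]
    (W : Ω → EuclideanSpace ℝ (Fin q)) (hWmeas : Measurable W)
    (hWint : Integrable W P)
    (μ : EuclideanSpace ℝ (Fin q)) (hμ : μ = ∫ ω, W ω ∂P)
    (hμ0 : μ = 0)
    (η : ℝ) (hη : 0 < η)
    (hsep : ∀ u : EuclideanSpace ℝ (Fin q), ‖u‖ = 1 → η ≤ ∫ ω, |⟪u, W ω - μ⟫| ∂P) :
    ∀ (a : EuclideanSpace ℝ (Fin q)) (b : ℝ),
      min (η / 2) 1 * max ‖a‖ |b| ≤ ∫ ω, |⟪a, W ω⟫ + b| ∂P := by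
  intro a b
  subst hμ0
  set t := min (η / 2) 1 with ht
  have ht1 : t ≤ 1 := min_le_right _ _
  have htη : t ≤ η / 2 := min_le_left _ _
  have ht0 : 0 ≤ t := le_min (by linarith) zero_le_one
  have hint : Integrable (fun ω => ⟪a, W ω⟫) P := hWint.const_inner a
  have hint2 : Integrable (fun ω => |⟪a, W ω⟫ + b|) P :=
    (hint.add (integrable_const b)).abs
  set I := ∫ ω, |⟪a, W ω⟫ + b| ∂P with hI
  -- Bound 1 : |b| ≤ I
  have hmean : (∫ ω, (⟪a, W ω⟫ + b) ∂P) = b := by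
    rw [integral_add hint (integrable_const b), integral_const, integral_inner hWint,
      ← hμ]
    simp
  have hb : |b| ≤ I := by
    calc |b| = |∫ ω, (⟪a, W ω⟫ + b) ∂P| := by rw [hmean]
    _ ≤ ∫ ω, |⟪a, W ω⟫ + b| ∂P := by
      simpa using norm_integral_le_integral_norm (μ := P) (fun ω => ⟪a, W ω⟫ + b)
  -- Bound 2 : η * ‖a‖ - |b| ≤ I  (when a ≠ 0)
  rcases eq_or_ne a 0 with ha | ha
  · have : max ‖a‖ |b| = |b| := by simp [ha, abs_nonneg]
    rw [this]
    nlinarith [abs_nonneg b]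
  · have hna : 0 < ‖a‖ := norm_pos_iff.mpr ha
    set u : EuclideanSpace ℝ (Fin q) := ‖a‖⁻¹ • a with hu
    have hu1 : ‖u‖ = 1 := by
      rw [hu, norm_smul, norm_inv, norm_norm, inv_mul_cancel₀ (ne_of_gt hna)]
    have hau : ∀ ω, ⟪a, W ω⟫ = ‖a‖ * ⟪u, W ω⟫ := by
      intro ω
      rw [hu, real_inner_smul_left]
      field_simp
    have hsep' : η ≤ ∫ ω, |⟪u, W ω⟫| ∂P := by
      have := hsep u hu1
      simpa using this
    have habs : (∫ ω, |⟪a, W ω⟫| ∂P) = ‖a‖ * ∫ ω, |⟪u, W ω⟫| ∂P := by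
      rw [← integral_const_mul]
      congr 1
      ext ω
      rw [hau ω, abs_mul, abs_of_pos hna]
    have hintu : Integrable (fun ω => |⟪u, W ω⟫|) P := (hWint.const_inner u).abs
    have h2 : η * ‖a‖ - |b| ≤ I := by
      have hmono : (∫ ω, |⟪a, W ω⟫| ∂P) ≤ ∫ ω, (|⟪a, W ω⟫ + b| + |b|) ∂P := by
        apply integral_mono hint.abs (hint2.add (integrable_const _))
        intro ω
        calc |⟪a, W ω⟫| = |⟪a, W ω⟫ + b + (-b)| := by ring_nf
        _ ≤ |⟪a, W ω⟫ + b| + |(-b)| := abs_add_le _ _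
        _ = |⟪a, W ω⟫ + b| + |b| := by rw [abs_neg]
      rw [integral_add hint2 (integrable_const _), integral_const] at hmono
      simp only [measure_univ, probReal_univ, ENNReal.toReal_one, smul_eq_mul, one_mul] at hmono
      have : η * ‖a‖ ≤ ∫ ω, |⟪a, W ω⟫| ∂P := by
        rw [habs]; nlinarith
      linarith
    rcases le_total ‖a‖ |b| with hm | hm
    · rw [max_eq_right hm]
      nlinarith [abs_nonneg b]
    · rw [max_eq_left hm]
      nlinarith
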